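/- Let G be a finite group satisfying the unique intersection number condition. Then for all x, y ∈ G whose conjugacy classes satisfy x^G ≠ (y⁻¹)^G, the setwise product of conjugacy classes x^G y^G = {ab : a ∈ x^G, b ∈ y^G} equals the single conjugacy class (xy)^G. -/
import Mathlib


open Pointwise

/-- A group `G` satisfies the *unique intersection number condition* (condition (3) of
Tanaka's theorem, equivalent to the Terwilliger algebra of the group association scheme of `G`
being almost commutative) if for every pair of distinct conjugacy classes `Ch ≠ Ci` of `G`
there is exactly one conjugacy class `Cj` with `Ch ∩ (Ci * Cj) ≠ ∅`. -/
def UniqueIntersectionNumberCondition (G : Type*) [Group G] : Prop :=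
  ∀ Ch Ci : ConjClasses G, Ch ≠ Ci →
    ∃! Cj : ConjClasses G, (Ch.carrier ∩ (Ci.carrier * Cj.carrier)).Nonempty

lemma carrier_mk_eq_conjugatesOf {G : Type*} [Group G] (a : G) :
    (ConjClasses.mk a).carrier = conjugatesOf a := by
  ext b
  rw [ConjClasses.mem_carrier_iff_mk_eq, ConjClasses.mk_eq_mk_iff_isConj]
  exact ⟨fun h => h.symm, fun h => h.symm⟩

lemma mem_conjugatesOf_iff' {G : Type*} [Group G] {a b : G} :
    b ∈ conjugatesOf a ↔ ∃ c : G, c * a * c⁻¹ = b := by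
  rw [conjugatesOf, Set.mem_setOf_eq, isConj_iff]

/-- If a finite group `G` satisfies the unique intersection number condition, then for all
`x, y ∈ G` with `x^G ≠ (y⁻¹)^G`, the setwise product of conjugacy classes `x^G y^G` is the
single conjugacy class `(xy)^G`. -/
theorem uniqueIntersectionNumberCondition_class_mul (G : Type*) [Group G] [Finite G]
    (hG : UniqueIntersectionNumberCondition G) (x y : G)
    (hxy : conjugatesOf x ≠ conjugatesOf (y⁻¹)) :
    conjugatesOf x * conjugatesOf y = conjugatesOf (x * y) := by
  have hne : ConjClasses.mk x ≠ ConjClasses.mk y⁻¹ := fun h =>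
    hxy (isConj_iff_conjugatesOf_eq.mp (ConjClasses.mk_eq_mk_iff_isConj.mp h))
  obtain ⟨Cj, hCj, huniq⟩ := hG (ConjClasses.mk x) (ConjClasses.mk y⁻¹) hne
  clear hCj
  have hxyprop : (((ConjClasses.mk x).carrier) ∩
      ((ConjClasses.mk y⁻¹).carrier * (ConjClasses.mk (x * y)).carrier)).Nonempty := by
    refine ⟨x, ConjClasses.mem_carrier_mk, y⁻¹, ConjClasses.mem_carrier_mk, y * x, ?_, by group⟩
    rw [carrier_mk_eq_conjugatesOf, mem_conjugatesOf_iff']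
    exact ⟨y, by group⟩
  apply Set.Subset.antisymm
  · rintro z ⟨a, ha, b, hb, rfl⟩
    have habprop : (((ConjClasses.mk x).carrier) ∩
        ((ConjClasses.mk y⁻¹).carrier * (ConjClasses.mk (a * b)).carrier)).Nonempty := by
      refine ⟨a, ?_, b⁻¹, ?_, b * a, ?_, by group⟩
      · rw [carrier_mk_eq_conjugatesOf]; exact ha
      · rw [carrier_mk_eq_conjugatesOf, mem_conjugatesOf_iff']
        rw [mem_conjugatesOf_iff'] at hb
        obtain ⟨c, hc⟩ := hb
        exact ⟨c, by rw [← hc]; group⟩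
      · rw [carrier_mk_eq_conjugatesOf, mem_conjugatesOf_iff']
        exact ⟨b, by group⟩
    have heq : ConjClasses.mk (a * b) = ConjClasses.mk (x * y) :=
      (huniq _ habprop).trans (huniq _ hxyprop).symm
    rw [ConjClasses.mk_eq_mk_iff_isConj] at heq
    exact heq.symm
  · rintro z hz
    rw [mem_conjugatesOf_iff'] at hz
    obtain ⟨c, hc⟩ := hz
    refine ⟨c * x * c⁻¹, mem_conjugatesOf_iff'.mpr ⟨c, rfl⟩,
      c * y * c⁻¹, mem_conjugatesOf_iff'.mpr ⟨c, rfl⟩, by rw [← hc]; group⟩
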